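/- Let n, l be integers with n ≥ 3 and l ≥ 2, and let j be an integer with 2 ≤ j ≤ n-1. Then l^(n-j) divides the binomial coefficient C(2·l^(n-2), j). -/

import Mathlib

-- j < 3^(j-1) for j ≥ 2
lemma lt_three_pow (j : ℕ) (hj : 2 ≤ j) : j < 3 ^ (j - 1) := by
  induction j, hj using Nat.le_induction with
  | base => norm_num
  | succ k hk ih =>
    have h1 : 3 ^ (k + 1 - 1) = 3 * 3 ^ (k - 1) := by
      have : k + 1 - 1 = (k - 1) + 1 := by omega
      rw [this, pow_succ]; ring
    omega

lemma aux_pe (p e j l : ℕ) (hp : p.Prime) (hpl : p ∣ l) (hj : 2 ≤ j)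
    (he : p ^ e ∣ j) : p ^ e ∣ 2 * l ^ (j - 2) := by
  have hpe_le : p ^ e ≤ j := Nat.le_of_dvd (by omega) he
  by_cases hp2 : p = 2
  · subst hp2
    have : j < 2 ^ j := Nat.lt_two_pow_self
    have he' : e < j := by
      by_contra h
      push_neg at h
      have := Nat.pow_le_pow_right (by norm_num : 1 ≤ 2) h
      omega
    have h1 : (2:ℕ) ^ e ∣ 2 ^ (j - 1) := pow_dvd_pow 2 (by omega)
    have h2 : (2:ℕ) ^ (j - 1) = 2 * 2 ^ (j - 2) := by
      have : j - 1 = (j - 2) + 1 := by omega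
      rw [this, pow_succ]; ring
    calc (2:ℕ)^e ∣ 2 ^ (j-1) := h1
    _ = 2 * 2 ^ (j - 2) := h2
    _ ∣ 2 * l ^ (j - 2) := mul_dvd_mul_left 2 (pow_dvd_pow_of_dvd hpl _)
  · have hp3 : 3 ≤ p := by
      have := hp.two_le
      omega
    have h3 : j < p ^ (j - 1) := by
      calc j < 3 ^ (j - 1) := lt_three_pow j hj
      _ ≤ p ^ (j - 1) := Nat.pow_le_pow_left hp3 _
    have he' : e < j - 1 := by
      by_contra h
      push_neg at h
      have := Nat.pow_le_pow_right (by omega : 1 ≤ p) h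
      omega
    calc p ^ e ∣ p ^ (j - 2) := pow_dvd_pow p (by omega)
    _ ∣ l ^ (j - 2) := pow_dvd_pow_of_dvd hpl _
    _ ∣ 2 * l ^ (j - 2) := dvd_mul_left _ _

theorem stmt_7 (n l j : ℕ) (hn : 3 ≤ n) (hl : 2 ≤ l) (hj1 : 2 ≤ j) (hj2 : j ≤ n - 1) :
    l ^ (n - j) ∣ (2 * l ^ (n - 2)).choose j := by
  set m := 2 * l ^ (n - 2) with hm_def
  have hl0 : 0 < l := by omega
  have hm0 : 0 < m := by positivity
  have hj0 : 0 < j := by omega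
  set g := Nat.gcd m j with hg_def
  have hg0 : 0 < g := Nat.gcd_pos_of_pos_right m hj0
  -- key: g ∣ 2 * l ^ (j - 2)
  have htgt0 : (2 * l ^ (j - 2)) ≠ 0 := by positivity
  have hg_dvd : g ∣ 2 * l ^ (j - 2) := by
    rw [← Nat.factorization_le_iff_dvd (by omega) htgt0]
    intro p
    by_cases hp : p.Prime
    · by_cases hpl : p ∣ l
      · have h1 : g.factorization p ≤ j.factorization p := by
          have := (Nat.factorization_le_iff_dvd (by omega) (by omega)).mpr
            (Nat.gcd_dvd_right m j)
          exact this p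
        set e := j.factorization p with he_def
        have he : p ^ e ∣ j := Nat.ordProj_dvd j p
        have := aux_pe p e j l hp hpl hj1 he
        have h2 : e ≤ (2 * l ^ (j - 2)).factorization p :=
          (Nat.Prime.pow_dvd_iff_le_factorization hp htgt0).mp this
        omega
      · have hlp : l.factorization p = 0 := Nat.factorization_eq_zero_of_not_dvd hpl
        have h1 : g.factorization p ≤ m.factorization p := by
          have := (Nat.factorization_le_iff_dvd (by omega) (by omega)).mpr
            (Nat.gcd_dvd_left m j)
          exact this p
        have hm_fact : m.factorization p = (2:ℕ).factorization p := by
          rw [hm_def, Nat.factorization_mul (by norm_num) (by positivity),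
            Nat.factorization_pow]
          simp [hlp]
        have ht_fact : (2 * l ^ (j - 2)).factorization p = (2:ℕ).factorization p := by
          rw [Nat.factorization_mul (by norm_num) (by positivity),
            Nat.factorization_pow]
          simp [hlp]
        omega
    · simp [Nat.factorization_eq_zero_of_not_prime _ hp]
  -- identity: m * (m-1).choose (j-1) = m.choose j * j
  have hid : m * (m - 1).choose (j - 1) = m.choose j * j := by
    have := Nat.add_one_mul_choose_eq (m - 1) (j - 1)
    have h2 : m - 1 + 1 = m := by omega
    have h3 : j - 1 + 1 = j := by omega
    simp only [Nat.succ_eq_add_one, h2, h3] at this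
    exact this
  have hdvd : m ∣ m.choose j * j := ⟨_, hid.symm⟩
  -- divide by g
  set a := m / g with ha_def
  set b := j / g with hb_def
  have ham : m = a * g := (Nat.div_mul_cancel (Nat.gcd_dvd_left m j)).symm
  have hbj : j = b * g := (Nat.div_mul_cancel (Nat.gcd_dvd_right m j)).symm
  have hcop : Nat.Coprime a b := Nat.coprime_div_gcd_div_gcd hg0
  have hadvd : a ∣ m.choose j * b := by
    have : a * g ∣ m.choose j * b * g := by
      rw [← ham]
      calc m ∣ m.choose j * j := hdvd
      _ = m.choose j * b * g := by rw [hbj]; ring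
    exact (Nat.mul_dvd_mul_iff_right hg0).mp this
  have haC : a ∣ m.choose j := (Nat.Coprime.dvd_of_dvd_mul_right hcop) hadvd
  -- l^(n-j) ∣ a
  have hm_split : m = l ^ (n - j) * (2 * l ^ (j - 2)) := by
    rw [hm_def]
    have : n - 2 = (n - j) + (j - 2) := by omega
    rw [this, pow_add]
    ring
  have hla : l ^ (n - j) ∣ a := by
    rw [ha_def, hm_split, Nat.mul_div_assoc _ hg_dvd]
    exact Dvd.intro _ rfl
  exact hla.trans haC
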